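/- The number of spanning trees of the complete graph K_n on n labeled vertices is n^{n-2} (Cayley's formula). -/

import Mathlib

open Function Finset

namespace Cayley

variable {n : ℕ}

/-- If `v` is periodic with period `t ≥ 1`, then all multiples fix it. -/
lemma iterate_mul_fixed {α : Type*} {q : α → α} {v : α} {t : ℕ} (hper : q^[t] v = v) :
    ∀ m, q^[m * t] v = v := by
  intro m
  induction m with
  | zero => simp
  | succ m ih => rw [Nat.succ_mul, Function.iterate_add_apply, hper, ih]

/-- A periodic point that reaches a fixed point is that fixed point. -/
lemma eq_root_of_periodic {α : Type*} {q : α → α} {r v : α} (hr : q r = r)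
    (hreach : ∃ k, q^[k] v = r) {t : ℕ} (ht : 1 ≤ t) (hper : q^[t] v = v) : v = r := by
  obtain ⟨k, hk⟩ := hreach
  have h1 : q^[k * t] v = v := iterate_mul_fixed hper k
  have h2 : k ≤ k * t := Nat.le_mul_of_pos_right k ht
  have h3 : q^[k * t] v = q^[k * t - k] (q^[k] v) := by
    rw [← Function.iterate_add_apply]
    congr 1
    omega
  rw [h3, hk, Function.iterate_fixed hr] at h1
  exact h1.symm

lemma agree_until {g g' : Fin n → Fin n} {S : Finset (Fin n)}
    (hagree : ∀ v ∉ S, g' v = g v) (v : Fin n) :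
    ∀ k, (∀ i < k, g^[i] v ∉ S) → g'^[k] v = g^[k] v := by
  intro k hk
  induction k with
  | zero => rfl
  | succ k ih =>
    have h1 : g'^[k] v = g^[k] v := ih fun i hi => hk i (by omega)
    rw [Function.iterate_succ_apply', Function.iterate_succ_apply', h1,
      hagree _ (hk k (by omega))]

lemma iterate_mem {g : Fin n → Fin n} {S : Finset (Fin n)}
    (hmap : ∀ v ∈ S, g v ∈ S) {x : Fin n} (hx : x ∈ S) : ∀ k, g^[k] x ∈ S := by
  intro k
  induction k with
  | zero => exact hx
  | succ k ih => rw [Function.iterate_succ_apply']; exact hmap _ ih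

lemma injOn_iterate {g : Fin n → Fin n} {S : Finset (Fin n)}
    (hinj : Set.InjOn g S) (hmap : ∀ v ∈ S, g v ∈ S) :
    ∀ m, Set.InjOn (g^[m]) S := by
  intro m
  induction m with
  | zero => exact fun x _ y _ h => h
  | succ m ih =>
    intro x hx y hy h
    rw [Function.iterate_succ_apply, Function.iterate_succ_apply] at h
    exact hinj hx hy (ih (hmap _ hx) (hmap _ hy) h)

/-- A point of a finset on which `g` is injective and invariant is periodic. -/
lemma periodic_of_injOn {g : Fin n → Fin n} {S : Finset (Fin n)}
    (hinj : Set.InjOn g S) (hmap : ∀ v ∈ S, g v ∈ S) {x : Fin n} (hx : x ∈ S) :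
    ∃ t, 1 ≤ t ∧ g^[t] x = x := by
  have hiter := iterate_mem hmap hx
  obtain ⟨i, -, j, -, hne, heq⟩ := Finset.exists_ne_map_eq_of_card_lt_of_maps_to
    (s := Finset.range (S.card + 1)) (t := S) (by simp) fun k _ => hiter k
  wlog hij : i < j generalizing i j
  · exact this j i hne.symm heq.symm (by omega)
  refine ⟨j - i, by omega, ?_⟩
  have h3 : g^[i] (g^[j - i] x) = g^[i] x := by
    rw [← Function.iterate_add_apply]
    rw [show i + (j - i) = j by omega]
    exact heq.symm
  exact injOn_iterate hinj hmap i (hiter _) hx h3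

section Heights

variable {q : Fin n → Fin n} {r : Fin n}

/-- height of `v`: number of steps to reach `r`. -/
noncomputable def hgt (hre : ∀ v, ∃ k, q^[k] v = r) (v : Fin n) : ℕ := Nat.find (hre v)

variable (hre : ∀ v, ∃ k, q^[k] v = r)

lemma hgt_spec (v : Fin n) : q^[hgt hre v] v = r := Nat.find_spec (hre v)

lemma iterate_eq_of_hgt_le (hr : q r = r) {v : Fin n} {k : ℕ} (hk : hgt hre v ≤ k) : q^[k] v = r := by
  rw [show k = (k - hgt hre v) + hgt hre v by omega, Function.iterate_add_apply,
    hgt_spec hre v, Function.iterate_fixed hr]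

lemma hgt_eq_zero_iff {v : Fin n} : hgt hre v = 0 ↔ v = r := by
  constructor
  · intro h
    have := hgt_spec hre v
    rwa [h] at this
  · intro h
    subst h
    exact Nat.find_eq_zero (hre v) |>.2 rfl

lemma hgt_apply {v : Fin n} (hv : v ≠ r) : hgt hre (q v) + 1 = hgt hre v := by
  have h1 : 1 ≤ hgt hre v := by
    rcases Nat.eq_zero_or_pos (hgt hre v) with h | h
    · exact absurd ((hgt_eq_zero_iff hre).1 h) hv
    · exact h
  have h2 : hgt hre (q v) ≤ hgt hre v - 1 := by
    apply Nat.find_le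
    have hs : q^[hgt hre v - 1 + 1] v = r := by
      rw [show hgt hre v - 1 + 1 = hgt hre v by omega]
      exact hgt_spec hre v
    rwa [Function.iterate_succ_apply] at hs
  have h3 : hgt hre v ≤ hgt hre (q v) + 1 := by
    apply Nat.find_le
    rw [Function.iterate_succ_apply]
    exact hgt_spec hre (q v)
  omega

lemma hgt_iterate {v : Fin n} : ∀ i, i ≤ hgt hre v → hgt hre (q^[i] v) = hgt hre v - i := by
  intro i
  induction i with
  | zero => simp
  | succ i ih =>
    intro hi
    have hih := ih (by omega)
    have hne : q^[i] v ≠ r := by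
      intro h
      have : hgt hre (q^[i] v) = 0 := (hgt_eq_zero_iff hre).2 h
      omega
    rw [Function.iterate_succ_apply']
    have := hgt_apply hre hne
    omega

lemma iterate_injOn_hgt {v : Fin n} {i j : ℕ} (hi : i ≤ hgt hre v) (hj : j ≤ hgt hre v)
    (h : q^[i] v = q^[j] v) : i = j := by
  have h1 := hgt_iterate hre i hi
  have h2 := hgt_iterate hre j hj
  rw [h] at h1
  omega

lemma hgt_lt [NeZero n] (v : Fin n) : hgt hre v < n := by
  have hinj : Function.Injective fun i : Fin (hgt hre v + 1) => q^[(i : ℕ)] v := by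
    intro i j h
    exact Fin.ext (iterate_injOn_hgt hre (by omega) (by omega) h)
  have := Fintype.card_le_of_injective _ hinj
  simpa using this

end Heights

section ForwardPart

variable (f : Fin n → Fin n)

open scoped Classical in
noncomputable def Mset : Finset (Fin n) :=
  univ.filter fun v => ∃ k ∈ Finset.Icc 1 n, f^[k] v = v

variable {f}

lemma mem_Mset {v : Fin n} : v ∈ Mset f ↔ ∃ k, 1 ≤ k ∧ f^[k] v = v := by
  simp only [Mset, mem_filter, mem_univ, true_and, Finset.mem_Icc]
  constructor
  · rintro ⟨k, ⟨h1, -⟩, h2⟩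
    exact ⟨k, h1, h2⟩
  · rintro ⟨k, hk1, hk⟩
    -- pigeonhole to find a small period
    obtain ⟨i, hi, j, hj, hne, heq⟩ := Finset.exists_ne_map_eq_of_card_lt_of_maps_to
      (s := Finset.range (n + 1)) (t := univ) (by simp) fun t _ => mem_univ (f^[t] v)
    simp only [Finset.mem_range] at hi hj
    wlog hij : i < j generalizing i j
    · exact this j i hne.symm heq.symm hj hi (by omega)
    refine ⟨j - i, ⟨by omega, by omega⟩, ?_⟩
    have hmk : f^[i * k] v = v := iterate_mul_fixed hk i
    have hge : i ≤ i * k := Nat.le_mul_of_pos_right i hk1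
    calc f^[j - i] v = f^[j - i] (f^[i * k] v) := by rw [hmk]
      _ = f^[(i * k - i) + j] v := by rw [← Function.iterate_add_apply]; congr 1; omega
      _ = f^[i * k - i] (f^[j] v) := by rw [← Function.iterate_add_apply]
      _ = f^[i * k - i] (f^[i] v) := by rw [heq]
      _ = f^[i * k] v := by rw [← Function.iterate_add_apply]; congr 1; omega
      _ = v := hmk

lemma apply_mem_Mset {v : Fin n} (hv : v ∈ Mset f) : f v ∈ Mset f := by
  rw [mem_Mset] at hv ⊢
  obtain ⟨k, hk1, hk⟩ := hv
  refine ⟨k, hk1, ?_⟩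
  rw [← Function.iterate_succ_apply, Function.iterate_succ_apply', hk]

lemma injOn_Mset : Set.InjOn f (Mset f) := by
  intro x hx y hy hxy
  rw [Finset.mem_coe, mem_Mset] at hx hy
  obtain ⟨kx, hkx1, hkx⟩ := hx
  obtain ⟨ky, hky1, hky⟩ := hy
  have hx' : f^[kx * ky] x = x := by
    rw [mul_comm]; exact iterate_mul_fixed hkx ky
  have hy' : f^[kx * ky] y = y := iterate_mul_fixed hky kx
  have h1 : 1 ≤ kx * ky := Nat.one_le_iff_ne_zero.2 (by positivity)
  calc x = f^[kx * ky] x := hx'.symm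
    _ = f^[kx * ky - 1] (f x) := by rw [← Function.iterate_succ_apply]; congr 1; omega
    _ = f^[kx * ky - 1] (f y) := by rw [hxy]
    _ = f^[kx * ky] y := by rw [← Function.iterate_succ_apply]; congr 1; omega
    _ = y := hy'

lemma exists_iterate_mem_Mset (v : Fin n) : ∃ k, f^[k] v ∈ Mset f := by
  obtain ⟨i, hi, j, hj, hne, heq⟩ := Finset.exists_ne_map_eq_of_card_lt_of_maps_to
    (s := Finset.range (n + 1)) (t := univ) (by simp) fun t _ => mem_univ (f^[t] v)
  wlog hij : i < j generalizing i j
  · exact this j hj i hi hne.symm heq.symm (by omega)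
  refine ⟨i, mem_Mset.2 ⟨j - i, by omega, ?_⟩⟩
  rw [← Function.iterate_add_apply, show j - i + i = j by omega]
  exact heq.symm

lemma Mset_nonempty [NeZero n] : (Mset f).Nonempty := by
  obtain ⟨k, hk⟩ := exists_iterate_mem_Mset (f := f) 0
  exact ⟨_, hk⟩

lemma exists_eq_apply_of_mem_Mset {v : Fin n} (hv : v ∈ Mset f) :
    ∃ u ∈ Mset f, f u = v := by
  obtain ⟨k, hk1, hk⟩ := mem_Mset.1 hv
  have h2 : f^[k - 1 + 1] v = v := by rw [show k - 1 + 1 = k by omega]; exact hk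
  rw [Function.iterate_succ_apply'] at h2
  exact ⟨f^[k - 1] v, iterate_mem (fun _ h => apply_mem_Mset h) hv _, h2⟩

variable (f)

/-- Sorted enumeration of `Mset f`. -/
noncomputable def eM : Fin (Mset f).card ≃o {x // x ∈ Mset f} := (Mset f).orderIsoOfFin rfl

/-- The spine: image of the sorted enumeration under `f`. -/
noncomputable def sM (i : Fin (Mset f).card) : {x // x ∈ Mset f} :=
  ⟨f (eM f i), apply_mem_Mset (eM f i).2⟩

lemma sM_bijective : Function.Bijective (sM f) := by
  rw [Fintype.bijective_iff_injective_and_card]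
  refine ⟨?_, by simp [Fintype.card_coe]⟩
  intro i j h
  have h2 : f ((eM f i : Fin n)) = f ((eM f j : Fin n)) := congrArg Subtype.val h
  have h3 := injOn_Mset (by exact_mod_cast (eM f i).2) (by exact_mod_cast (eM f j).2) h2
  exact (eM f).injective (Subtype.ext h3)

noncomputable def sE : Fin (Mset f).card ≃ {x // x ∈ Mset f} :=
  Equiv.ofBijective _ (sM_bijective f)

noncomputable def phiQ (v : Fin n) : Fin n :=
  if h : v ∈ Mset f then
    (if h2 : ((sE f).symm ⟨v, h⟩ : ℕ) + 1 < (Mset f).card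
      then (sM f ⟨((sE f).symm ⟨v, h⟩ : ℕ) + 1, h2⟩ : Fin n)
      else v)
  else f v

lemma phiQ_notMem {v : Fin n} (h : v ∉ Mset f) : phiQ f v = f v := dif_neg h

lemma sE_symm_sM (i : Fin (Mset f).card) (h : (sM f i : Fin n) ∈ Mset f) :
    (sE f).symm ⟨(sM f i : Fin n), h⟩ = i := by
  have : (⟨(sM f i : Fin n), h⟩ : {x // x ∈ Mset f}) = sM f i := Subtype.ext rfl
  rw [this]
  exact (sE f).symm_apply_apply i

lemma phiQ_spine (i : Fin (Mset f).card) (h2 : (i : ℕ) + 1 < (Mset f).card) :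
    phiQ f (sM f i) = sM f ⟨(i : ℕ) + 1, h2⟩ := by
  have hmem := (sM f i).2
  rw [phiQ, dif_pos hmem, sE_symm_sM, dif_pos h2]

lemma phiQ_last (i : Fin (Mset f).card) (h2 : ¬ ((i : ℕ) + 1 < (Mset f).card)) :
    phiQ f (sM f i) = sM f i := by
  have hmem := (sM f i).2
  rw [phiQ, dif_pos hmem, sE_symm_sM, dif_neg h2]

variable [NeZero n]

lemma Mset_card_pos : 0 < (Mset f).card := Finset.card_pos.2 Mset_nonempty

noncomputable def phiA : Fin n := (sM f ⟨0, Mset_card_pos f⟩ : Fin n)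

noncomputable def rootF : Fin n :=
  (sM f ⟨(Mset f).card - 1, by have := Mset_card_pos f; omega⟩ : Fin n)

lemma phiQ_rootF : phiQ f (rootF f) = rootF f :=
  phiQ_last f _ (by have := Mset_card_pos f; simp; omega)

lemma spine_reach : ∀ (d : ℕ) (i : Fin (Mset f).card), (Mset f).card - 1 - (i : ℕ) = d →
    (phiQ f)^[d] (sM f i : Fin n) = rootF f := by
  intro d
  induction d with
  | zero =>
    intro i hi
    have hip := i.2
    have : i = ⟨(Mset f).card - 1, by have := Mset_card_pos f; omega⟩ :=
      Fin.ext (show (i : ℕ) = (Mset f).card - 1 by omega)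
    rw [this]
    rfl
  | succ d ih =>
    intro i hi
    have h2 : (i : ℕ) + 1 < (Mset f).card := by have := i.2; omega
    rw [Function.iterate_succ_apply, phiQ_spine f i h2]
    exact ih _ (by simp; omega)

lemma phiQ_reaches (v : Fin n) : ∃ k, (phiQ f)^[k] v = rootF f := by
  have hex := exists_iterate_mem_Mset (f := f) v
  set k0 := Nat.find hex with hk0
  have hmem : f^[k0] v ∈ Mset f := Nat.find_spec hex
  have hagree : (phiQ f)^[k0] v = f^[k0] v :=
    agree_until (fun w hw => phiQ_notMem f hw) v k0 fun i hi => Nat.find_min hex hi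
  obtain ⟨i, hi⟩ := (sM_bijective f).2 ⟨f^[k0] v, hmem⟩
  refine ⟨((Mset f).card - 1 - (i : ℕ)) + k0, ?_⟩
  rw [Function.iterate_add_apply, hagree, show f^[k0] v = (sM f i : Fin n) by rw [hi]]
  exact spine_reach f _ i rfl

end ForwardPart

section Root

def IsRooted (q : Fin n → Fin n) : Prop := ∃ r, q r = r ∧ ∀ v, ∃ k, q^[k] v = r

lemma IsRooted.existsUnique {q : Fin n → Fin n} (hq : IsRooted q) :
    ∃! r, r ∈ (univ : Finset (Fin n)) ∧ q r = r := by
  obtain ⟨r, hr, hre⟩ := hq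
  refine ⟨r, ⟨mem_univ r, hr⟩, ?_⟩
  rintro r' ⟨-, hr'⟩
  exact eq_root_of_periodic hr (hre r') le_rfl (by simpa using hr')

noncomputable def root (q : Fin n → Fin n) (hq : IsRooted q) : Fin n :=
  Finset.choose _ _ hq.existsUnique

lemma root_fixed (q : Fin n → Fin n) (hq : IsRooted q) : q (root q hq) = root q hq :=
  (Finset.choose_property _ _ hq.existsUnique)

lemma root_eq {q : Fin n → Fin n} (hq : IsRooted q) {r : Fin n} (hr : q r = r) :
    root q hq = r :=
  hq.existsUnique.unique ⟨mem_univ _, root_fixed q hq⟩ ⟨mem_univ _, hr⟩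

lemma root_reaches (q : Fin n → Fin n) (hq : IsRooted q) :
    ∀ v, ∃ k, q^[k] v = root q hq := by
  intro v
  have hq' := hq
  obtain ⟨r, hr, hre⟩ := hq'
  rw [root_eq hq hr]
  exact hre v

end Root

section BackwardPart

variable [NeZero n] (a : Fin n) (q : Fin n → Fin n) (hq : IsRooted q)

open scoped Classical in
noncomputable def Lset : Finset (Fin n) :=
  univ.filter fun v => ∃ k ∈ Finset.range (n + 1), q^[k] a = v

variable {a q}

include hq in
lemma mem_Lset {v : Fin n} : v ∈ Lset a q ↔ ∃ k, q^[k] a = v := by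
  simp only [Lset, mem_filter, mem_univ, true_and, Finset.mem_range]
  constructor
  · rintro ⟨k, -, hk⟩
    exact ⟨k, hk⟩
  · rintro ⟨k, hk⟩
    by_cases hkn : k < n + 1
    · exact ⟨k, hkn, hk⟩
    · have hlt := hgt_lt (root_reaches q hq) a
      refine ⟨hgt (root_reaches q hq) a, by omega, ?_⟩
      rw [hgt_spec (root_reaches q hq) a, ← hk]
      exact (iterate_eq_of_hgt_le (root_reaches q hq) (root_fixed q hq) (by omega)).symm

include hq in
lemma iterate_mem_Lset (k : ℕ) : q^[k] a ∈ Lset a q := (mem_Lset hq).2 ⟨k, rfl⟩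

include hq in
lemma root_mem_Lset : root q hq ∈ Lset a q := by
  obtain ⟨k, hk⟩ := root_reaches q hq a
  exact (mem_Lset hq).2 ⟨k, hk⟩

include hq in
lemma q_maps_Lset {v : Fin n} (hv : v ∈ Lset a q) : q v ∈ Lset a q := by
  obtain ⟨k, hk⟩ := (mem_Lset hq).1 hv
  exact (mem_Lset hq).2 ⟨k + 1, by rw [Function.iterate_succ_apply', hk]⟩

include hq in
lemma Lset_eq_image :
    Lset a q = (Finset.range (hgt (root_reaches q hq) a + 1)).image (fun k => q^[k] a) := by
  ext v
  rw [mem_Lset hq, Finset.mem_image]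
  constructor
  · rintro ⟨k, hk⟩
    by_cases hkh : k ≤ hgt (root_reaches q hq) a
    · exact ⟨k, Finset.mem_range.2 (by omega), hk⟩
    · refine ⟨hgt (root_reaches q hq) a, Finset.mem_range.2 (by omega), ?_⟩
      rw [hgt_spec (root_reaches q hq) a, ← hk]
      exact (iterate_eq_of_hgt_le (root_reaches q hq) (root_fixed q hq) (by omega)).symm
  · rintro ⟨k, -, hk⟩
    exact ⟨k, hk⟩

include hq in
lemma card_Lset : (Lset a q).card = hgt (root_reaches q hq) a + 1 := by
  rw [Lset_eq_image hq, Finset.card_image_of_injOn, Finset.card_range]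
  intro i hi j hj hij
  rw [Finset.coe_range, Set.mem_Iio] at hi hj
  exact iterate_injOn_hgt (root_reaches q hq) (by omega) (by omega) hij

noncomputable def eL : Fin (Lset a q).card ≃o {x // x ∈ Lset a q} :=
  (Lset a q).orderIsoOfFin rfl

noncomputable def psiF (a : Fin n) (q : Fin n → Fin n) (hq : IsRooted q) (v : Fin n) : Fin n :=
  if h : v ∈ Lset a q then q^[((eL (a := a) (q := q)).symm ⟨v, h⟩ : ℕ)] a else q v

lemma psiF_notMem {v : Fin n} (h : v ∉ Lset a q) : psiF a q hq v = q v := dif_neg h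

lemma psiF_apply_eL (j : Fin (Lset a q).card) :
    psiF a q hq (eL j : Fin n) = q^[(j : ℕ)] a := by
  have hmem := (eL (a := a) (q := q) j).2
  rw [psiF, dif_pos hmem]
  congr 2
  have : (⟨((eL (a := a) (q := q)) j : Fin n), hmem⟩ : {x // x ∈ Lset a q}) = eL j :=
    Subtype.ext rfl
  rw [this, OrderIso.symm_apply_apply]

lemma psiF_mem_Lset {v : Fin n} (h : v ∈ Lset a q) : psiF a q hq v ∈ Lset a q := by
  rw [psiF, dif_pos h]
  exact iterate_mem_Lset hq _

lemma psiF_injOn : Set.InjOn (psiF a q hq) (Lset a q) := by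
  intro x hx y hy hxy
  rw [Finset.mem_coe] at hx hy
  simp only [psiF] at hxy
  rw [dif_pos hx, dif_pos hy] at hxy
  have hcard := card_Lset (a := a) hq
  have hx2 := ((eL (a := a) (q := q)).symm ⟨x, hx⟩).2
  have hy2 := ((eL (a := a) (q := q)).symm ⟨y, hy⟩).2
  have := iterate_injOn_hgt (root_reaches q hq) (v := a) (by omega) (by omega) hxy
  have h3 : (eL (a := a) (q := q)).symm ⟨x, hx⟩ = (eL (a := a) (q := q)).symm ⟨y, hy⟩ :=
    Fin.ext this
  have h4 := congrArg (fun z => ((eL (a := a) (q := q)) z : Fin n)) h3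
  simpa using h4

lemma Mset_psiF : Mset (psiF a q hq) = Lset a q := by
  ext v
  constructor
  · intro hv
    obtain ⟨t, ht1, ht⟩ := mem_Mset.1 hv
    by_contra hvL
    -- the q-orbit of v reaches the root, hence enters L
    have hex : ∃ k, q^[k] v ∈ Lset a q := by
      obtain ⟨k, hk⟩ := root_reaches q hq v
      exact ⟨k, hk ▸ root_mem_Lset hq⟩
    set k0 := Nat.find hex with hk0
    have hmem : q^[k0] v ∈ Lset a q := Nat.find_spec hex
    have hagree : (psiF a q hq)^[k0] v = q^[k0] v :=
      agree_until (fun w hw => psiF_notMem hq hw) v k0 fun i hi => Nat.find_min hex hi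
    have hclosed : ∀ d, (psiF a q hq)^[d + k0] v ∈ Lset a q := by
      intro d
      rw [Function.iterate_add_apply, hagree]
      exact iterate_mem (fun _ h => psiF_mem_Lset hq h) hmem d
    have hfix : ∀ m, (psiF a q hq)^[m * t] v = v := iterate_mul_fixed ht
    have := hclosed (k0 * t - k0)
    rw [show k0 * t - k0 + k0 = k0 * t by
        have : k0 ≤ k0 * t := Nat.le_mul_of_pos_right k0 ht1; omega] at this
    rw [iterate_mul_fixed ht k0] at this
    exact hvL this
  · intro hv
    obtain ⟨t, ht1, ht⟩ := periodic_of_injOn (psiF_injOn hq)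
      (fun _ h => psiF_mem_Lset hq h) hv
    exact mem_Mset.2 ⟨t, ht1, ht⟩

end BackwardPart

section Joyal

lemma orderIsoOfFin_congr {S T : Finset (Fin n)} (h : S = T) (hc : S.card = T.card)
    (i : Fin S.card) :
    ((S.orderIsoOfFin rfl i : {x // x ∈ S}) : Fin n)
      = ((T.orderIsoOfFin rfl (Fin.cast hc i) : {x // x ∈ T}) : Fin n) := by
  subst h
  have : Fin.cast hc i = i := by ext; simp
  rw [this]

variable [NeZero n]

lemma phiQ_isRooted (f : Fin n → Fin n) : IsRooted (phiQ f) :=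
  ⟨rootF f, phiQ_rootF f, phiQ_reaches f⟩

lemma phiQ_iterate_zero (f : Fin n → Fin n) :
    ∀ (i : ℕ) (h : i < (Mset f).card), (phiQ f)^[i] (phiA f) = (sM f ⟨i, h⟩ : Fin n) := by
  intro i
  induction i with
  | zero => intro h; rfl
  | succ i ih =>
    intro h
    rw [Function.iterate_succ_apply', ih (by omega), phiQ_spine f ⟨i, by omega⟩ h]

lemma Lset_phiQ (f : Fin n → Fin n) : Lset (phiA f) (phiQ f) = Mset f := by
  have hq := phiQ_isRooted f
  have hpos := Mset_card_pos f
  ext v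
  rw [mem_Lset hq]
  constructor
  · rintro ⟨k, hk⟩
    by_cases hkc : k < (Mset f).card
    · rw [phiQ_iterate_zero f k hkc] at hk
      exact hk ▸ (sM f ⟨k, hkc⟩).2
    · have h1 : (phiQ f)^[(Mset f).card - 1] (phiA f) = rootF f :=
        phiQ_iterate_zero f _ (by omega)
      have h2 : (phiQ f)^[k] (phiA f)
          = (phiQ f)^[k - ((Mset f).card - 1)] ((phiQ f)^[(Mset f).card - 1] (phiA f)) := by
        rw [← Function.iterate_add_apply]; congr 1; omega
      rw [h2, h1, Function.iterate_fixed (phiQ_rootF f)] at hk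
      exact hk ▸ (sM f _).2
  · intro hv
    obtain ⟨i, hi⟩ := (sM_bijective f).2 ⟨v, hv⟩
    exact ⟨(i : ℕ), by rw [phiQ_iterate_zero f i i.2, Fin.eta, hi]⟩

lemma joyal_left_inv (f : Fin n → Fin n) :
    psiF (phiA f) (phiQ f) (phiQ_isRooted f) = f := by
  funext v
  have hML := Lset_phiQ f
  have hc : (Lset (phiA f) (phiQ f)).card = (Mset f).card := by rw [hML]
  by_cases hv : v ∈ Mset f
  · have hvL : v ∈ Lset (phiA f) (phiQ f) := by rw [hML]; exact hv
    rw [psiF, dif_pos hvL]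
    set j := (eL (a := phiA f) (q := phiQ f)).symm ⟨v, hvL⟩ with hj
    have hjv : ((eL (a := phiA f) (q := phiQ f)) j : Fin n) = v := by
      rw [hj, OrderIso.apply_symm_apply]
    have hjc : (j : ℕ) < (Mset f).card := by have := j.2; omega
    rw [phiQ_iterate_zero f (j : ℕ) hjc]
    show f ((eM f ⟨(j : ℕ), hjc⟩ : Fin n)) = f v
    congr 1
    have h5 := orderIsoOfFin_congr hML hc j
    rw [show Fin.cast hc j = ⟨(j : ℕ), hjc⟩ from rfl,
      show ((Mset f).orderIsoOfFin rfl) = eM f from rfl] at h5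
    rw [← h5]
    exact hjv
  · have hvL : v ∉ Lset (phiA f) (phiQ f) := by rw [hML]; exact hv
    rw [psiF_notMem (phiQ_isRooted f) hvL, phiQ_notMem f hv]

lemma sM_val_psiF (a : Fin n) (q : Fin n → Fin n) (hq : IsRooted q)
    (i : Fin (Mset (psiF a q hq)).card) :
    (sM (psiF a q hq) i : Fin n) = q^[(i : ℕ)] a := by
  have hML := Mset_psiF (a := a) (q := q) hq
  have hc : (Mset (psiF a q hq)).card = (Lset a q).card := by rw [hML]
  show psiF a q hq ((eM (psiF a q hq) i : Fin n)) = q^[(i : ℕ)] a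
  have h1 := orderIsoOfFin_congr hML hc i
  show psiF a q hq ((eM (psiF a q hq) i : Fin n)) = q^[(i : ℕ)] a
  rw [show ((eM (psiF a q hq) i : Fin n)) = (((Lset a q).orderIsoOfFin rfl (Fin.cast hc i)
    : {x // x ∈ Lset a q}) : Fin n) from h1]
  rw [show (((Lset a q).orderIsoOfFin rfl (Fin.cast hc i) : {x // x ∈ Lset a q}) : Fin n)
    = ((eL (a := a) (q := q) (Fin.cast hc i) : {x // x ∈ Lset a q}) : Fin n) from rfl]
  rw [psiF_apply_eL hq]
  rfl

lemma joyal_right_inv_A (a : Fin n) (q : Fin n → Fin n) (hq : IsRooted q) :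
    phiA (psiF a q hq) = a := by
  rw [phiA, sM_val_psiF a q hq]
  rfl

lemma joyal_right_inv_Q (a : Fin n) (q : Fin n → Fin n) (hq : IsRooted q) :
    phiQ (psiF a q hq) = q := by
  set f := psiF a q hq with hf
  have hML := Mset_psiF (a := a) (q := q) hq
  have hc : (Mset f).card = (Lset a q).card := by rw [hML]
  funext v
  by_cases hv : v ∈ Mset f
  · obtain ⟨i, hi⟩ := (sM_bijective f).2 ⟨v, hv⟩
    have hiv : (sM f i : Fin n) = v := by rw [hi]
    by_cases h2 : (i : ℕ) + 1 < (Mset f).card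
    · rw [← hiv, phiQ_spine f i h2, sM_val_psiF a q hq, sM_val_psiF a q hq,
        Function.iterate_succ_apply']
    · rw [← hiv, phiQ_last f i h2, sM_val_psiF a q hq]
      have hcard := card_Lset (a := a) hq
      have hival : (i : ℕ) = hgt (root_reaches q hq) a := by
        have := i.2; omega
      rw [hival, hgt_spec (root_reaches q hq) a, root_fixed q hq]
  · have hvL : v ∉ Lset a q := by rw [← hML]; exact hv
    rw [phiQ_notMem f hv, hf, psiF_notMem hq hvL]

noncomputable def joyalEquiv : (Fin n → Fin n) ≃ Fin n × {q : Fin n → Fin n // IsRooted q} where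
  toFun f := (phiA f, ⟨phiQ f, phiQ_isRooted f⟩)
  invFun x := psiF x.1 x.2.1 x.2.2
  left_inv f := joyal_left_inv f
  right_inv x := by
    obtain ⟨a, q, hq⟩ := x
    exact Prod.ext (joyal_right_inv_A a q hq) (Subtype.ext (joyal_right_inv_Q a q hq))

end Joyal

section Count

abbrev Rn (n : ℕ) [NeZero n] : Type :=
  {p : Fin n → Fin n // p 0 = 0 ∧ ∀ v, ∃ k, p^[k] v = 0}

lemma conj_iterate (π : Equiv.Perm (Fin n)) (hinv : ∀ x, π (π x) = x) (q : Fin n → Fin n) :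
    ∀ (k : ℕ) (v : Fin n), (⇑π ∘ q ∘ ⇑π)^[k] v = π (q^[k] (π v)) := by
  intro k
  induction k with
  | zero => intro v; exact (hinv v).symm
  | succ k ih =>
    intro v
    rw [Function.iterate_succ_apply', ih, Function.iterate_succ_apply']
    show π (q (π (π (q^[k] (π v))))) = _
    rw [hinv]

variable [NeZero n]

noncomputable def fiberEquiv (r : Fin n) :
    {q : {q : Fin n → Fin n // IsRooted q} // root q.1 q.2 = r} ≃ Rn n where
  toFun x := ⟨⇑(Equiv.swap r 0) ∘ x.1.1 ∘ ⇑(Equiv.swap r 0), by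
    have hfix : x.1.1 r = r := by
      have h0 := root_fixed x.1.1 x.1.2
      rwa [x.2] at h0
    constructor
    · show Equiv.swap r 0 (x.1.1 (Equiv.swap r 0 0)) = 0
      rw [Equiv.swap_apply_right, hfix, Equiv.swap_apply_left]
    · intro v
      obtain ⟨k, hk⟩ := root_reaches x.1.1 x.1.2 (Equiv.swap r 0 v)
      refine ⟨k, ?_⟩
      rw [conj_iterate _ (fun y => Equiv.swap_apply_self _ _ y) _ k v, hk, x.2,
        Equiv.swap_apply_left]⟩
  invFun y := by
    refine ⟨⟨⇑(Equiv.swap r 0) ∘ y.1 ∘ ⇑(Equiv.swap r 0), ⟨r, ?_, ?_⟩⟩, ?_⟩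
    · show Equiv.swap r 0 (y.1 (Equiv.swap r 0 r)) = r
      rw [Equiv.swap_apply_left, y.2.1, Equiv.swap_apply_right]
    · intro v
      obtain ⟨k, hk⟩ := y.2.2 (Equiv.swap r 0 v)
      refine ⟨k, ?_⟩
      rw [conj_iterate _ (fun z => Equiv.swap_apply_self _ _ z) _ k v, hk,
        Equiv.swap_apply_right]
    · apply root_eq
      show Equiv.swap r 0 (y.1 (Equiv.swap r 0 r)) = r
      rw [Equiv.swap_apply_left, y.2.1, Equiv.swap_apply_right]
  left_inv x := by
    apply Subtype.ext
    apply Subtype.ext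
    funext v
    show Equiv.swap r 0 (Equiv.swap r 0 (x.1.1 (Equiv.swap r 0 (Equiv.swap r 0 v)))) = _
    rw [Equiv.swap_apply_self, Equiv.swap_apply_self]
  right_inv y := by
    apply Subtype.ext
    funext v
    show Equiv.swap r 0 (Equiv.swap r 0 (y.1 (Equiv.swap r 0 (Equiv.swap r 0 v)))) = _
    rw [Equiv.swap_apply_self, Equiv.swap_apply_self]

lemma card_Rn_eq : (n : ℕ) ^ n = n * (n * Nat.card (Rn n)) := by
  have h1 : Nat.card (Fin n → Fin n) = n ^ n := by
    rw [Nat.card_eq_fintype_card, Fintype.card_fun, Fintype.card_fin]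
  have e2 : {q : Fin n → Fin n // IsRooted q} ≃ Fin n × Rn n :=
    (Equiv.sigmaFiberEquiv (fun q : {q : Fin n → Fin n // IsRooted q} =>
      root q.1 q.2)).symm.trans
      ((Equiv.sigmaCongrRight fiberEquiv).trans (Equiv.sigmaEquivProd _ _))
  have h3 := Nat.card_congr (joyalEquiv (n := n))
  rw [h1, Nat.card_prod, Nat.card_eq_fintype_card (α := Fin n), Fintype.card_fin,
    Nat.card_congr e2, Nat.card_prod, Nat.card_eq_fintype_card (α := Fin n),
    Fintype.card_fin] at h3
  exact h3

lemma card_Rn : Nat.card (Rn n) = n ^ (n - 2) := by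
  have hn : 1 ≤ n := Nat.pos_of_ne_zero (NeZero.ne n)
  by_cases h1 : n = 1
  · subst h1
    have hsub : Subsingleton (Rn 1) :=
      ⟨fun a b => Subtype.ext (funext fun v => Subsingleton.elim _ _)⟩
    have hne : Nonempty (Rn 1) :=
      ⟨⟨id, rfl, fun v => ⟨0, Subsingleton.elim _ _⟩⟩⟩
    rw [show (1 : ℕ) ^ (1 - 2) = 1 from one_pow _, Nat.card_eq_one_iff_unique]
    exact ⟨hsub, hne⟩
  · have h2 : 2 ≤ n := by omega
    have h3 := card_Rn_eq (n := n)
    have h4 : (n : ℕ) ^ n = n * (n * n ^ (n - 2)) := by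
      rw [← pow_succ', ← pow_succ']
      congr 1
      omega
    rw [h4] at h3
    have h5 : 0 < n * n := by positivity
    have := Nat.eq_of_mul_eq_mul_left (by omega : 0 < n)
      (Nat.eq_of_mul_eq_mul_left (by omega : 0 < n) h3.symm)
    omega

end Count

section Graphs

open SimpleGraph Walk

variable [NeZero n]

def graphOf (p : Fin n → Fin n) : SimpleGraph (Fin n) where
  Adj v w := v ≠ w ∧ (p v = w ∨ p w = v)
  symm := ⟨by rintro v w ⟨h1, h2⟩; exact ⟨h1.symm, h2.symm⟩⟩
  loopless := ⟨fun v h => h.1 rfl⟩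

variable {p : Fin n → Fin n} (hp0 : p 0 = 0) (hpr : ∀ v, ∃ k, p^[k] v = 0)

include hp0 hpr

lemma apply_ne {v : Fin n} (hv : v ≠ 0) : p v ≠ v := fun h =>
  hv (eq_root_of_periodic hp0 (hpr v) le_rfl (by simpa using h))

lemma graphOf_adj {v : Fin n} (hv : v ≠ 0) : (graphOf p).Adj v (p v) :=
  ⟨fun h => apply_ne hp0 hpr hv h.symm, Or.inl rfl⟩

lemma graphOf_connected : (graphOf p).Connected := by
  have hreach : ∀ (k : ℕ) (v : Fin n), p^[k] v = 0 → (graphOf p).Reachable v 0 := by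
    intro k
    induction k with
    | zero => intro v h; rw [show v = 0 from h]
    | succ k ih =>
      intro v h
      by_cases hv : v = 0
      · rw [hv]
      · exact ((graphOf_adj hp0 hpr hv).reachable).trans
          (ih (p v) (by rw [← Function.iterate_succ_apply]; exact h))
  have : (graphOf p).Preconnected := by
    intro u v
    obtain ⟨k1, h1⟩ := hpr u
    obtain ⟨k2, h2⟩ := hpr v
    exact (hreach k1 u h1).trans (hreach k2 v h2).symm
  exact ⟨this⟩

lemma graphOf_acyclic : (graphOf p).IsAcyclic := by
  intro v0 c hc
  have hsupne : c.support.toFinset.Nonempty :=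
    ⟨v0, List.mem_toFinset.2 c.start_mem_support⟩
  obtain ⟨u, hu, hmax⟩ := Finset.exists_max_image c.support.toFinset (hgt hpr) hsupne
  rw [List.mem_toFinset] at hu
  have hmax' : ∀ y ∈ c.support, hgt hpr y ≤ hgt hpr u := fun y hy =>
    hmax y (List.mem_toFinset.2 hy)
  have hc' := hc.rotate hu
  set c' := c.rotate u hu with hc'def
  have hsupport : ∀ w ∈ c'.support, w ∈ c.support := by
    intro w hw
    rw [Walk.support_eq_cons, List.mem_cons] at hw
    rcases hw with hw | hw
    · rw [hw]; exact hu
    · exact List.mem_of_mem_tail ((SimpleGraph.Walk.support_rotate c u hu).mem_iff.1 hw)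
  cases hcc : c' with
  | nil => exact hc'.ne_nil hcc
  | cons h₁ d =>
    rename_i x
    have hxsup : x ∈ c.support := by
      apply hsupport
      rw [hcc, Walk.support_cons]
      exact List.mem_cons_of_mem _ d.start_mem_support
    have hu0 : u ≠ 0 := by
      intro hu0
      have hgu : hgt hpr u = 0 := (hgt_eq_zero_iff hpr).2 hu0
      have hx0 : x = 0 := (hgt_eq_zero_iff hpr).1 (by have := hmax' x hxsup; omega)
      exact h₁.1 (by rw [hu0, hx0])
    have hadj_to_pu : ∀ y : Fin n, (graphOf p).Adj u y → y ∈ c.support → y = p u := by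
      intro y hadj hy
      rcases hadj.2 with h | h
      · exact h.symm
      · exfalso
        have hy0 : y ≠ 0 := by
          intro h0
          rw [h0, hp0] at h
          exact hu0 h.symm
        have h2 := hgt_apply hpr hy0
        rw [h] at h2
        have := hmax' y hy
        omega
    obtain ⟨z, qq, h', heq⟩ := SimpleGraph.Walk.exists_cons_eq_concat h₁ d
    have hzsup : z ∈ c.support := by
      apply hsupport
      rw [hcc, heq, Walk.support_concat]
      exact List.mem_append_left _ qq.end_mem_support
    have hx : x = p u := hadj_to_pu x h₁ hxsup
    have hz : z = p u := hadj_to_pu z h'.symm hzsup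
    have hnodup : (s(u, x) :: d.edges).Nodup := by
      have := hc'.isTrail.edges_nodup
      rwa [hcc, Walk.edges_cons] at this
    have hlen : 3 ≤ d.length + 1 := by
      have := hc'.three_le_length
      rwa [hcc, Walk.length_cons] at this
    have hedges : s(u, x) :: d.edges = qq.edges ++ [s(z, u)] := by
      have := congrArg Walk.edges heq
      rwa [Walk.edges_cons, Walk.edges_concat, List.concat_eq_append] at this
    cases hqe : qq.edges with
    | nil =>
      rw [hqe, List.nil_append] at hedges
      have hde : d.edges = [] := (List.cons.injEq _ _ _ _ ▸ hedges).2
      have := d.length_edges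
      rw [hde] at this
      simp at this
      omega
    | cons e t =>
      rw [hqe, List.cons_append] at hedges
      have hde : d.edges = t ++ [s(z, u)] := (List.cons.injEq _ _ _ _ ▸ hedges).2
      have hmem : s(u, x) ∈ d.edges := by
        rw [hde]
        apply List.mem_append_right
        rw [show s(u, x) = s(z, u) by rw [hx, hz, Sym2.eq_swap]]
        exact List.mem_singleton.2 rfl
      exact (List.nodup_cons.1 hnodup).1 hmem

lemma graphOf_isTree : (graphOf p).IsTree :=
  ⟨graphOf_connected hp0 hpr, graphOf_acyclic hp0 hpr⟩

omit hp0 hpr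

/-! ### From trees to parent maps -/

variable {T : SimpleGraph (Fin n)} (hT : T.IsTree)

noncomputable def pathTo (v : Fin n) : T.Walk v 0 :=
  Classical.choose (hT.existsUnique_path v 0).exists

lemma pathTo_isPath (v : Fin n) : (pathTo hT v).IsPath :=
  Classical.choose_spec (hT.existsUnique_path v 0).exists

lemma pathTo_unique {v : Fin n} (W : T.Walk v 0) (hW : W.IsPath) : W = pathTo hT v :=
  (hT.existsUnique_path v 0).unique hW (pathTo_isPath hT v)

noncomputable def par (v : Fin n) : Fin n := (pathTo hT v).getVert 1

lemma par_eq {v : Fin n} (W : T.Walk v 0) (hW : W.IsPath) : par hT v = W.getVert 1 := by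
  rw [par, ← pathTo_unique hT W hW]

lemma par_zero : par hT 0 = 0 := by
  have h : (pathTo hT 0) = Walk.nil := Walk.isPath_iff_eq_nil.1 (pathTo_isPath hT 0)
  rw [par, h]
  rfl

lemma par_cons {v w : Fin n} {h : T.Adj v w} {W : T.Walk w 0}
    (hW : pathTo hT v = Walk.cons h W) : par hT v = w := by
  rw [par, hW, Walk.getVert_cons_succ, Walk.getVert_zero]

lemma par_reaches : ∀ v, ∃ k, (par hT)^[k] v = 0 := by
  suffices H : ∀ (m : ℕ) (v : Fin n), (pathTo hT v).length ≤ m → ∃ k, (par hT)^[k] v = 0 by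
    exact fun v => H _ v le_rfl
  intro m
  induction m with
  | zero =>
    intro v hv
    cases hpt : pathTo hT v with
    | nil => exact ⟨0, rfl⟩
    | cons h W => rw [hpt] at hv; simp at hv
  | succ m ih =>
    intro v hv
    cases hpt : pathTo hT v with
    | nil => exact ⟨0, rfl⟩
    | cons h W =>
      rename_i w
      have hWp : W.IsPath := by
        have := pathTo_isPath hT v
        rw [hpt, Walk.cons_isPath_iff] at this
        exact this.1
      have hlen : (pathTo hT w).length ≤ m := by
        rw [← pathTo_unique hT W hWp]
        have := congrArg Walk.length hpt
        rw [Walk.length_cons] at this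
        omega
      obtain ⟨k, hk⟩ := ih w hlen
      refine ⟨k + 1, ?_⟩
      rw [Function.iterate_succ_apply, par_cons hT hpt, hk]

lemma par_adj {v : Fin n} (hv : v ≠ 0) : T.Adj v (par hT v) := by
  cases hpt : pathTo hT v with
  | nil => exact absurd rfl hv
  | cons h W => rw [par_cons hT hpt]; exact h

lemma graphOf_par : graphOf (par hT) = T := by
  ext v w
  constructor
  · rintro ⟨hne, h | h⟩
    · have hv0 : v ≠ 0 := by
        intro h0
        rw [h0, par_zero hT] at h
        exact hne (h0.trans h)
      rw [← h]
      exact par_adj hT hv0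
    · have hw0 : w ≠ 0 := by
        intro h0
        rw [h0, par_zero hT] at h
        exact hne (h ▸ h0).symm
      rw [← h]
      exact (par_adj hT hw0).symm
  · intro hadj
    refine ⟨hadj.ne, ?_⟩
    by_cases hv : v ∈ (pathTo hT w).support
    · right
      set P := pathTo hT w with hP
      have hQ : (P.takeUntil v hv).IsPath := (pathTo_isPath hT w).takeUntil hv
      have hsingle : (⟨P.takeUntil v hv, hQ⟩ : T.Path w v) = Path.singleton hadj.symm :=
        hT.IsAcyclic.path_unique _ _
      have heq : P.takeUntil v hv = Walk.cons hadj.symm Walk.nil :=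
        congrArg Subtype.val hsingle
      have hspec := P.take_spec hv
      rw [heq, Walk.cons_append, Walk.nil_append] at hspec
      rw [par, ← hP, ← hspec, Walk.getVert_cons_succ, Walk.getVert_zero]
    · left
      have hW : (Walk.cons hadj (pathTo hT w)).IsPath :=
        (pathTo_isPath hT w).cons hv
      exact par_cons hT (pathTo_unique hT _ hW).symm

include hp0 hpr in
lemma exists_good_walk : ∀ (k : ℕ) (v : Fin n), p^[k] v = 0 →
    ∃ W : (graphOf p).Walk v 0, W.IsPath ∧ (v ≠ 0 → W.getVert 1 = p v) ∧
      (∀ w ∈ W.support, ∃ j, w = p^[j] v) := by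
  intro k
  induction k with
  | zero =>
    intro v h
    refine ⟨Walk.nil.copy rfl (show v = 0 from h), by simp, fun hv => absurd h hv, ?_⟩
    intro w hw
    rw [Walk.support_copy] at hw
    simp at hw
    exact ⟨0, by simp [hw]⟩
  | succ k ih =>
    intro v h
    by_cases hv : v = 0
    · refine ⟨Walk.nil.copy rfl hv, by simp, fun hv' => absurd hv hv', ?_⟩
      intro w hw
      rw [Walk.support_copy] at hw
      simp at hw
      exact ⟨0, by simp [hw]⟩
    · obtain ⟨W', hW'p, hW'1, hW's⟩ := ih (p v) (by rw [← Function.iterate_succ_apply]; exact h)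
      have hvs : v ∉ W'.support := by
        intro hmem
        obtain ⟨j, hj⟩ := hW's v hmem
        rw [← Function.iterate_succ_apply] at hj
        exact hv (eq_root_of_periodic hp0 (hpr v) (by omega : 1 ≤ j + 1) hj.symm)
      refine ⟨Walk.cons (graphOf_adj hp0 hpr hv) W', hW'p.cons hvs, ?_, ?_⟩
      · intro _
        rw [Walk.getVert_cons_succ, Walk.getVert_zero]
      · intro w hw
        rw [Walk.support_cons, List.mem_cons] at hw
        rcases hw with hw | hw
        · exact ⟨0, by simp [hw]⟩
        · obtain ⟨j, hj⟩ := hW's w hw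
          exact ⟨j + 1, by rw [Function.iterate_succ_apply]; exact hj⟩

include hp0 hpr in
lemma par_graphOf : par (graphOf_isTree hp0 hpr) = p := by
  funext v
  by_cases hv : v = 0
  · rw [hv, par_zero, hp0]
  · obtain ⟨k, hk⟩ := hpr v
    obtain ⟨W, hWp, hW1, -⟩ := exists_good_walk hp0 hpr k v hk
    rw [par_eq _ W hWp, hW1 hv]

noncomputable def treeEquiv : {T : SimpleGraph (Fin n) // T.IsTree} ≃ Rn n where
  toFun T := ⟨par T.2, par_zero T.2, par_reaches T.2⟩
  invFun x := ⟨graphOf x.1, graphOf_isTree x.2.1 x.2.2⟩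
  left_inv T := Subtype.ext (graphOf_par T.2)
  right_inv x := Subtype.ext (par_graphOf x.2.1 x.2.2)

end Graphs

end Cayley

theorem stmt_6 (n : ℕ) (hn : 1 ≤ n) :
    Nat.card {T : SimpleGraph (Fin n) // T.IsTree} = n ^ (n - 2) := by
  haveI : NeZero n := ⟨by omega⟩
  rw [Nat.card_congr (Cayley.treeEquiv (n := n))]
  exact Cayley.card_Rn
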